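/- arXiv:1707.01297 — 2 statements merged into one kernel-verified Lean document; each statement's English description precedes it below -/
import Mathlib

section
/- Let S be a finite set, and for σ∈S let a_σ≥0, u_σ∈ℝ and ρ_σ>0; let |K|>0, δt>0, and let ρⁿ>0, ρⁿ⁺¹>0 satisfy the discrete mass balance (|K|/δt)(ρⁿ⁺¹−ρⁿ) + Σ_{σ∈S} F_σ = 0, where F_σ = a_σ ρ_σ u_σ. Let eⁿ>0, eⁿ⁺¹>0 and e_σ>0 (σ∈S), and let φ be twice continuously differentiable on (0,∞). Then there exists e^{1/2} ∈ [[eⁿ,eⁿ⁺¹]] such that φ'(eⁿ⁺¹)·[(|K|/δt)(ρⁿ⁺¹eⁿ⁺¹−ρⁿeⁿ) + Σ_{σ∈S} F_σ e_σ] = (|K|/δt)(ρⁿ⁺¹φ(eⁿ⁺¹)−ρⁿφ(eⁿ)) + Σ_{σ∈S} F_σ φ(e_σ) + R_e, where R_e = (1/2)(|K|/δt)·ρⁿ·φ''(e^{1/2})·(eⁿ⁺¹−eⁿ)² + Σ_{σ∈S} F_σ·[φ(eⁿ⁺¹) − φ(e_σ) + φ'(eⁿ⁺¹)(e_σ−eⁿ⁺¹)].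 -/
open Set

/-- Second-order Taylor expansion with Lagrange remainder, around `b`, evaluated at `a`,
for a function that is `C²` on `Ioi 0`; valid for either order of `a` and `b`. -/
lemma taylor2_uIcc (φ : ℝ → ℝ) (hφ : ContDiffOn ℝ 2 φ (Set.Ioi 0))
    {a b : ℝ} (ha : 0 < a) (hb : 0 < b) :
    ∃ c ∈ Set.uIcc a b,
      φ a = φ b + deriv φ b * (a - b) + deriv (deriv φ) c * (a - b) ^ 2 / 2 := by
  rcases eq_or_ne a b with rfl | hab
  · exact ⟨a, left_mem_uIcc, by ring⟩
  -- `deriv φ` is C¹ on the open set `Ioi 0`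
  have hφ' : ContDiffOn ℝ 1 (deriv φ) (Set.Ioi 0) :=
    hφ.deriv_of_isOpen isOpen_Ioi (by norm_num)
  have hder : ∀ x ∈ Set.Ioi (0 : ℝ), HasDerivAt φ (deriv φ x) x := by
    intro x hx
    exact ((hφ.differentiableOn (by norm_num)).differentiableAt
      (isOpen_Ioi.mem_nhds hx)).hasDerivAt
  have hder2 : ∀ x ∈ Set.Ioi (0 : ℝ), HasDerivAt (deriv φ) (deriv (deriv φ) x) x := by
    intro x hx
    exact ((hφ'.differentiableOn (by norm_num)).differentiableAt
      (isOpen_Ioi.mem_nhds hx)).hasDerivAt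
  set M : ℝ := (φ a - φ b - deriv φ b * (a - b)) / ((a - b) ^ 2 / 2) with hM
  set g : ℝ → ℝ := fun t => φ a - φ t - deriv φ t * (a - t) - M * (a - t) ^ 2 / 2 with hg
  have hga : g a = 0 := by simp [hg]
  have h2 : (a - b) ^ 2 / 2 ≠ 0 := div_ne_zero (pow_ne_zero 2 (sub_ne_zero.2 hab)) two_ne_zero
  have hMc : M * ((a - b) ^ 2 / 2) = φ a - φ b - deriv φ b * (a - b) := div_mul_cancel₀ _ h2
  clear_value M
  have hgb : g b = 0 := by
    show φ a - φ b - deriv φ b * (a - b) - M * (a - b) ^ 2 / 2 = 0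
    linear_combination -hMc
  have hIccsub : Set.uIcc a b ⊆ Set.Ioi 0 := by
    intro x hx
    rcases Set.mem_uIcc.1 hx with h | h
    · exact lt_of_lt_of_le ha h.1
    · exact lt_of_lt_of_le hb h.1
  have hgc : ContinuousOn g (Set.uIcc a b) := by
    have c1 : ContinuousOn φ (Set.uIcc a b) := (hφ.continuousOn).mono hIccsub
    have c2 : ContinuousOn (deriv φ) (Set.uIcc a b) := (hφ'.continuousOn).mono hIccsub
    exact (continuousOn_const.sub c1).sub
      (c2.mul (continuousOn_const.sub continuousOn_id)) |>.sub
      (continuousOn_const.mul ((continuousOn_const.sub continuousOn_id).pow 2) |>.div_const 2)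
  have hgd : ∀ x ∈ Set.Ioi (0 : ℝ),
      HasDerivAt g ((a - x) * (M - deriv (deriv φ) x)) x := by
    intro x hx
    have h1 := (hasDerivAt_const x (φ a)).sub (hder x hx)
    have h2 : HasDerivAt (fun t => deriv φ t * (a - t))
        (deriv (deriv φ) x * (a - x) + deriv φ x * (0 - 1)) x :=
      (hder2 x hx).mul ((hasDerivAt_const x a).sub (hasDerivAt_id x))
    have h3 : HasDerivAt (fun t => M * (a - t) ^ 2 / 2)
        (M * (2 * (a - x) ^ 1 * (0 - 1)) / 2) x := by
      exact ((((hasDerivAt_const x a).sub (hasDerivAt_id x)).pow 2).const_mul M).div_const 2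
    have := (h1.sub h2).sub h3
    exact this.congr_deriv (by ring)
  -- Rolle's theorem on the ordered interval
  have key : ∃ c ∈ Set.uIcc a b, deriv (deriv φ) c = M := by
    rcases lt_or_gt_of_ne hab with h | h
    · obtain ⟨c, hc, hc0⟩ := exists_hasDerivAt_eq_zero h
        (hgc.mono (by rw [Set.uIcc_of_le h.le])) (hga.trans hgb.symm)
        (fun x hx => hgd x (hIccsub (by rw [Set.uIcc_of_le h.le]; exact Set.Ioo_subset_Icc_self hx)))
      refine ⟨c, by rw [Set.uIcc_of_le h.le]; exact Set.Ioo_subset_Icc_self hc, ?_⟩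
      have hca : a - c ≠ 0 := sub_ne_zero.2 (ne_of_lt hc.1)
      have := mul_eq_zero.1 hc0
      rcases this with h' | h'
      · exact absurd h' hca
      · linarith [sub_eq_zero.1 h']
    · obtain ⟨c, hc, hc0⟩ := exists_hasDerivAt_eq_zero h
        (hgc.mono (by rw [Set.uIcc_of_ge h.le])) (hgb.trans hga.symm)
        (fun x hx => hgd x (hIccsub (by rw [Set.uIcc_of_ge h.le]; exact Set.Ioo_subset_Icc_self hx)))
      refine ⟨c, by rw [Set.uIcc_of_ge h.le]; exact Set.Ioo_subset_Icc_self hc, ?_⟩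
      have hca : a - c ≠ 0 := sub_ne_zero.2 (ne_of_lt hc.2).symm
      rcases mul_eq_zero.1 hc0 with h' | h'
      · exact absurd h' hca
      · linarith [sub_eq_zero.1 h']
  obtain ⟨c, hc, hcM⟩ := key
  refine ⟨c, hc, ?_⟩
  rw [hcM]
  linear_combination -hMc

/-- Discrete renormalized internal energy balance (Lemma 2.2): multiplying the
convection part of the discrete internal energy balance by `φ'(eⁿ⁺¹)` yields the
renormalized convection operator plus an explicit remainder, for some intermediate
energy `e^{1/2} ∈ [[eⁿ, eⁿ⁺¹]]`. -/
theorem discrete_renormalized_energy_balance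
    {ι : Type*} (S : Finset ι) (a u ρσ eσ : ι → ℝ)
    (ha : ∀ σ ∈ S, 0 ≤ a σ) (hρσ : ∀ σ ∈ S, 0 < ρσ σ) (heσ : ∀ σ ∈ S, 0 < eσ σ)
    (K δt ρn ρn1 en en1 : ℝ) (hK : 0 < K) (hδt : 0 < δt)
    (hρn : 0 < ρn) (hρn1 : 0 < ρn1) (hen : 0 < en) (hen1 : 0 < en1)
    (F : ι → ℝ) (hF : ∀ σ ∈ S, F σ = a σ * ρσ σ * u σ)
    (hmass : K / δt * (ρn1 - ρn) + ∑ σ ∈ S, F σ = 0)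
    (φ : ℝ → ℝ) (hφ : ContDiffOn ℝ 2 φ (Set.Ioi 0)) :
    ∃ eh ∈ Set.uIcc en en1,
      deriv φ en1 * (K / δt * (ρn1 * en1 - ρn * en) + ∑ σ ∈ S, F σ * eσ σ)
        = K / δt * (ρn1 * φ en1 - ρn * φ en) + ∑ σ ∈ S, F σ * φ (eσ σ)
          + (1 / 2 * (K / δt) * ρn * deriv (deriv φ) eh * (en1 - en) ^ 2
              + ∑ σ ∈ S, F σ * (φ en1 - φ (eσ σ) + deriv φ en1 * (eσ σ - en1))) := by
  obtain ⟨c, hc, htaylor⟩ := taylor2_uIcc φ hφ hen hen1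
  refine ⟨c, hc, ?_⟩
  have hsum : ∑ σ ∈ S, F σ * (φ en1 - φ (eσ σ) + deriv φ en1 * (eσ σ - en1))
      = (φ en1 - deriv φ en1 * en1) * ∑ σ ∈ S, F σ
        + deriv φ en1 * ∑ σ ∈ S, F σ * eσ σ - ∑ σ ∈ S, F σ * φ (eσ σ) := by
    rw [Finset.mul_sum, Finset.mul_sum, ← Finset.sum_add_distrib, ← Finset.sum_sub_distrib]
    exact Finset.sum_congr rfl fun σ _ => by ring
  rw [hsum]
  have hE : (en - en1) ^ 2 = (en1 - en) ^ 2 := by ring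
  linear_combination (K / δt * ρn) * htaylor + (K / δt * ρn / 2) * hE
    + (deriv φ en1 * en1 - φ en1) * hmass
end

section
/- Let γ>1 and M>1. Consider discrete mesh data with a single time level n, oriented face velocities u_f with |u_f| ≤ M, face densities ρ_f ∈ (0,M], cell energies e_K ∈ [1/M,M], and mass fluxes F_{K,f} = |σ_f|·ρ_f·u_{K,f}. For each internal face f let e_{KL,f} ∈ [[e_{K_f}, e_{L_f}]] be the tangent-intersection point of φ_e at e_{K_f} and e_{L_f} (equal to the common value when they coincide), and let the face energy e_f satisfy e_f ∈ [[e_{K_f}, e_{KL,f}]] if u_f ≥ 0 and e_f ∈ [[e_{L_f}, e_{KL,f}]] otherwise. Define (δφ_e)_f = φ_e(e_{K_f}) − φ_e(e_f) + φ_e'(e_{K_f})(e_{KL,f}−e_{K_f}) + (1/2)(φ_e'(e_{K_f})+φ_e'(e_{L_f}))·(e_f−e_{KL,f}), and for each cell K set |K|·(δR₂)_K = Σ_{f∈E(K)} (δφ_e)_f·F_{K,f} and |K|·(R₂)_K = Σ_{f∈E(K)} F_{K,f}·(φ_e(e_K) + φ_e'(e_K)(e_f − e_K) − φ_e(e_f)).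 Then: (a) (R₂)_K ≥ (δR₂)_K for every cell K; (b) for every h>0, G≥0 and every family of reals (ψ_K) with |ψ_{K_f} − ψ_{L_f}| ≤ G·h for every internal face f, |Σ_{K∈C} |K|·(δR₂)_K·ψ_K| ≤ 3·M²·|φ_e'|_∞·G·h·Σ_{f∈F} |σ_f|·|e_{K_f}−e_{L_f}|, where |φ_e'|_∞ = max(|φ_e'(1/M)|, |φ_e'(M)|). -/
/-- `φ_e(z) = -log z / (γ-1)`. -/
noncomputable def phiE (γ z : ℝ) : ℝ := -Real.log z / (γ - 1)

/-- `φ_e'(z) = -1/((γ-1) z)`. -/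
noncomputable def phiE' (γ z : ℝ) : ℝ := -1 / ((γ - 1) * z)

/-- The set `E(K)` of faces incident to the cell `K`. -/
def cellFaces {Cell Face : Type*} [Fintype Face] [DecidableEq Cell]
    (Kf Lf : Face → Cell) (Kc : Cell) : Finset Face :=
  Finset.univ.filter (fun f => Kf f = Kc ∨ Lf f = Kc)

/-- Oriented normal velocity `u_{K,f}`. -/
def orientedVel {Cell Face : Type*} [DecidableEq Cell]
    (Kf : Face → Cell) (uf : Face → ℝ) (Kc : Cell) (f : Face) : ℝ :=
  if Kf f = Kc then uf f else -uf f

/-- The per-face quantity `(δφ)_σ` of the reduced-diffusion remainder. -/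
noncomputable def dphi (φ φ' : ℝ → ℝ) (xK xL xKL xσ : ℝ) : ℝ :=
  φ xK - φ xσ + φ' xK * (xKL - xK) + 1 / 2 * (φ' xK + φ' xL) * (xσ - xKL)

lemma RDaux.mem_Icc_of_uIcc {a b lo hi p : ℝ} (ha : a ∈ Set.Icc lo hi)
    (hb : b ∈ Set.Icc lo hi) (hp : p ∈ Set.uIcc a b) : p ∈ Set.Icc lo hi := by
  rcases le_total a b with h | h
  · rw [Set.uIcc_of_le h] at hp; exact ⟨le_trans ha.1 hp.1, le_trans hp.2 hb.2⟩
  · rw [Set.uIcc_of_ge h] at hp; exact ⟨le_trans hb.1 hp.1, le_trans hp.2 ha.2⟩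

lemma RDaux.abs_sub_le_uIcc {a b p q : ℝ} (hp : p ∈ Set.uIcc a b) (hq : q ∈ Set.uIcc a b) :
    |p - q| ≤ |a - b| := by
  rcases le_total a b with h | h
  · rw [Set.uIcc_of_le h] at hp hq
    rw [abs_sub_le_iff, abs_of_nonpos (by linarith)]
    exact ⟨by linarith [hp.1, hp.2, hq.1, hq.2], by linarith [hp.1, hp.2, hq.1, hq.2]⟩
  · rw [Set.uIcc_of_ge h] at hp hq
    rw [abs_sub_le_iff, abs_of_nonneg (by linarith)]
    exact ⟨by linarith [hp.1, hp.2, hq.1, hq.2], by linarith [hp.1, hp.2, hq.1, hq.2]⟩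

lemma RDaux.phiE'_mono {γ a b : ℝ} (hγ : 1 < γ) (ha : 0 < a) (hab : a ≤ b) :
    phiE' γ a ≤ phiE' γ b := by
  unfold phiE'
  have h1 : 0 < (γ - 1) * a := mul_pos (by linarith) ha
  have h2 : (γ - 1) * a ≤ (γ - 1) * b := by nlinarith
  rw [neg_div, neg_div, neg_le_neg_iff]
  exact one_div_le_one_div_of_le h1 h2

lemma RDaux.sign_nonneg {γ xK xL xKL xσ : ℝ} (hγ : 1 < γ) (hxK : 0 < xK) (hxL : 0 < xL)
    (hKL : xKL ∈ Set.uIcc xK xL) (hσ : xσ ∈ Set.uIcc xK xKL) :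
    0 ≤ (phiE' γ xK - phiE' γ xL) * (xσ - xKL) := by
  rcases le_total xK xL with h | h
  · have hm : phiE' γ xK ≤ phiE' γ xL := RDaux.phiE'_mono hγ hxK h
    rw [Set.uIcc_of_le h] at hKL
    rw [Set.uIcc_of_le hKL.1] at hσ
    nlinarith [hσ.2, hKL.1]
  · have hm : phiE' γ xL ≤ phiE' γ xK := RDaux.phiE'_mono hγ hxL h
    rw [Set.uIcc_of_ge h] at hKL
    rw [Set.uIcc_of_ge hKL.2] at hσ
    exact mul_nonneg (by linarith) (by linarith [hσ.1])

lemma RDaux.sign_nonpos {γ xK xL xKL xσ : ℝ} (hγ : 1 < γ) (hxK : 0 < xK) (hxL : 0 < xL)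
    (hKL : xKL ∈ Set.uIcc xK xL) (hσ : xσ ∈ Set.uIcc xL xKL) :
    (phiE' γ xK - phiE' γ xL) * (xσ - xKL) ≤ 0 := by
  rcases le_total xK xL with h | h
  · have hm : phiE' γ xK ≤ phiE' γ xL := RDaux.phiE'_mono hγ hxK h
    rw [Set.uIcc_of_le h] at hKL
    rw [Set.uIcc_of_ge hKL.2] at hσ
    exact mul_nonpos_of_nonpos_of_nonneg (by linarith) (by linarith [hσ.1])
  · have hm : phiE' γ xL ≤ phiE' γ xK := RDaux.phiE'_mono hγ hxL h
    rw [Set.uIcc_of_ge h] at hKL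
    rw [Set.uIcc_of_le hKL.1] at hσ
    exact mul_nonpos_of_nonneg_of_nonpos (by linarith) (by linarith [hσ.2])

lemma RDaux.key_K (φ φ' : ℝ → ℝ) (xK xL xKL xσ F : ℝ)
    (hs : 0 ≤ F * ((φ' xK - φ' xL) * (xσ - xKL))) :
    dphi φ φ' xK xL xKL xσ * F ≤ F * (φ xK + φ' xK * (xσ - xK) - φ xσ) := by
  have hid : F * (φ xK + φ' xK * (xσ - xK) - φ xσ) - dphi φ φ' xK xL xKL xσ * F
      = F * ((φ' xK - φ' xL) * (xσ - xKL)) / 2 := by unfold dphi; ring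
  linarith

lemma RDaux.key_L (φ φ' : ℝ → ℝ) (xK xL xKL xσ F : ℝ)
    (htan : φ xK + φ' xK * (xKL - xK) = φ xL + φ' xL * (xKL - xL))
    (hs : F * ((φ' xK - φ' xL) * (xσ - xKL)) ≤ 0) :
    dphi φ φ' xK xL xKL xσ * F ≤ F * (φ xL + φ' xL * (xσ - xL) - φ xσ) := by
  have h0 : φ xK + φ' xK * (xKL - xK) - (φ xL + φ' xL * (xKL - xL)) = 0 := by
    rw [htan]; ring
  have h1 : F * (φ xK + φ' xK * (xKL - xK) - (φ xL + φ' xL * (xKL - xL))) = 0 := by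
    rw [h0, mul_zero]
  have hid : F * (φ xL + φ' xL * (xσ - xL) - φ xσ) - dphi φ φ' xK xL xKL xσ * F
      = -(F * ((φ' xK - φ' xL) * (xσ - xKL))) / 2
        - F * (φ xK + φ' xK * (xKL - xK) - (φ xL + φ' xL * (xKL - xL))) := by
    unfold dphi; ring
  linarith

lemma RDaux.log_lip {M a b : ℝ} (hM : 1 < M) (ha : a ∈ Set.Icc (1/M) M)
    (hb : b ∈ Set.Icc (1/M) M) : |Real.log a - Real.log b| ≤ M * |a - b| := by
  have hM0 : (0:ℝ) < M := by linarith
  have hiM : (0:ℝ) < 1/M := by positivity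
  have key : ∀ x y : ℝ, x ∈ Set.Icc (1/M) M → y ∈ Set.Icc (1/M) M → y ≤ x →
      Real.log x - Real.log y ≤ M * (x - y) := by
    intro x y hx hy hxy
    have hy0 : 0 < y := lt_of_lt_of_le hiM hy.1
    have hx0 : 0 < x := lt_of_lt_of_le hiM hx.1
    have h1 : Real.log x - Real.log y = Real.log (x / y) := (Real.log_div hx0.ne' hy0.ne').symm
    have h2 : Real.log (x / y) ≤ x / y - 1 := Real.log_le_sub_one_of_pos (by positivity)
    have h3 : x / y - 1 = (x - y) / y := by field_simp
    have h4 : (x - y) / y ≤ M * (x - y) := by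
      rw [div_le_iff₀ hy0]
      have hMy : (1:ℝ) ≤ y * M := (div_le_iff₀ hM0).mp hy.1
      nlinarith [mul_nonneg (sub_nonneg.mpr hxy) (sub_nonneg.mpr hMy)]
    linarith
  rcases le_total b a with h | h
  · rw [abs_of_nonneg (sub_nonneg.mpr ((Real.log_le_log_iff (by linarith [hb.1]) (by linarith [ha.1])).mpr h)), abs_of_nonneg (by linarith)]
    exact key a b ha hb h
  · rw [abs_sub_comm, abs_sub_comm a b,
      abs_of_nonneg (sub_nonneg.mpr ((Real.log_le_log_iff (by linarith [ha.1]) (by linarith [hb.1])).mpr h)), abs_of_nonneg (by linarith)]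
    exact key b a hb ha h

lemma RDaux.phiE'_abs_le {γ M z : ℝ} (hγ : 1 < γ) (hM : 1 < M)
    (hz : z ∈ Set.Icc (1/M) M) : |phiE' γ z| ≤ M / (γ - 1) := by
  have hz0 : 0 < z := lt_of_lt_of_le (by positivity) hz.1
  have hγ1 : 0 < γ - 1 := by linarith
  unfold phiE'
  rw [abs_div, abs_neg, abs_one, abs_of_pos (by positivity), div_le_div_iff₀ (by positivity) hγ1]
  have hMz : (1:ℝ) ≤ z * M := (div_le_iff₀ (by linarith)).mp hz.1
  nlinarith [mul_le_mul_of_nonneg_left hMz (le_of_lt hγ1)]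

lemma RDaux.dphi_bound {γ M xK xL xKL xσ : ℝ} (hγ : 1 < γ) (hM : 1 < M)
    (hxK : xK ∈ Set.Icc (1/M) M) (hxL : xL ∈ Set.Icc (1/M) M)
    (hKL : xKL ∈ Set.uIcc xK xL) (hσ : xσ ∈ Set.uIcc xK xL) :
    |dphi (phiE γ) (phiE' γ) xK xL xKL xσ| ≤ 3 * (M / (γ - 1)) * |xK - xL| := by
  have hγ1 : 0 < γ - 1 := by linarith
  set B := M / (γ - 1) with hBdef
  have hB0 : 0 ≤ B := by positivity
  have hd : |xσ - xKL| ≤ |xK - xL| := RDaux.abs_sub_le_uIcc hσ hKL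
  have hd2 : |xKL - xK| ≤ |xK - xL| := RDaux.abs_sub_le_uIcc hKL Set.left_mem_uIcc
  have hd3 : |xK - xσ| ≤ |xK - xL| := RDaux.abs_sub_le_uIcc Set.left_mem_uIcc hσ
  have h1 : |phiE γ xK - phiE γ xσ| ≤ B * |xK - xL| := by
    have hσm : xσ ∈ Set.Icc (1/M) M := RDaux.mem_Icc_of_uIcc hxK hxL hσ
    have : phiE γ xK - phiE γ xσ = -(Real.log xK - Real.log xσ) / (γ - 1) := by
      unfold phiE; ring
    rw [this, abs_div, abs_neg, abs_of_pos hγ1]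
    calc |Real.log xK - Real.log xσ| / (γ - 1) ≤ M * |xK - xσ| / (γ - 1) := by
          gcongr; exact RDaux.log_lip hM hxK hσm
      _ ≤ M * |xK - xL| / (γ - 1) := by gcongr
      _ = B * |xK - xL| := by rw [hBdef]; ring
  have h2 : |phiE' γ xK * (xKL - xK)| ≤ B * |xK - xL| := by
    rw [abs_mul]
    exact mul_le_mul (RDaux.phiE'_abs_le hγ hM hxK) hd2 (abs_nonneg _) hB0
  have h3 : |1 / 2 * (phiE' γ xK + phiE' γ xL) * (xσ - xKL)| ≤ B * |xK - xL| := by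
    rw [abs_mul, abs_mul]
    have hsum : |phiE' γ xK + phiE' γ xL| ≤ 2 * B := by
      calc |phiE' γ xK + phiE' γ xL| ≤ |phiE' γ xK| + |phiE' γ xL| := abs_add_le _ _
        _ ≤ 2 * B := by
            linarith [RDaux.phiE'_abs_le (M := M) hγ hM hxK,
              RDaux.phiE'_abs_le (M := M) hγ hM hxL]
    have : |(1:ℝ)/2| = 1/2 := by norm_num
    rw [this]
    calc 1/2 * |phiE' γ xK + phiE' γ xL| * |xσ - xKL| ≤ 1/2 * (2 * B) * |xK - xL| := by
          apply mul_le_mul _ hd (abs_nonneg _) (by positivity)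
          nlinarith [abs_nonneg (phiE' γ xK + phiE' γ xL)]
      _ = B * |xK - xL| := by ring
  calc |dphi (phiE γ) (phiE' γ) xK xL xKL xσ|
      ≤ |phiE γ xK - phiE γ xσ| + |phiE' γ xK * (xKL - xK)|
        + |1 / 2 * (phiE' γ xK + phiE' γ xL) * (xσ - xKL)| := by
        unfold dphi
        exact (abs_add_le _ _).trans (add_le_add_left (abs_add_le _ _) _)
    _ ≤ 3 * B * |xK - xL| := by linarith
    _ = 3 * (M / (γ - 1)) * |xK - xL| := by rw [hBdef]

/-- Splitting of the explicit internal-energy convection remainder under the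
limitation assumption `(H_e^exp)` (Lemma 3.9): (a) the remainder `(R₂)_K` dominates
the conservative part `(δR₂)_K`, and (b) the conservative part satisfies a weak
(dual-norm) estimate. -/
theorem explicit_reduced_diffusion_energy_remainder
    (γ M : ℝ) (hγ : 1 < γ) (hM : 1 < M)
    (Cell Face : Type*) [Fintype Cell] [Fintype Face] [DecidableEq Cell]
    (Kf Lf : Face → Cell) (hKL : ∀ f, Kf f ≠ Lf f)
    (area : Face → ℝ) (harea : ∀ f, 0 < area f)
    (measK : Cell → ℝ) (hmeas : ∀ Kc, 0 < measK Kc)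
    (uf : Face → ℝ) (hu : ∀ f, |uf f| ≤ M)
    (ρf : Face → ℝ) (hρf : ∀ f, ρf f ∈ Set.Ioc 0 M)
    (e : Cell → ℝ) (he : ∀ Kc, e Kc ∈ Set.Icc (1 / M) M)
    (eKL ef : Face → ℝ)
    (hKLmem : ∀ f, eKL f ∈ Set.uIcc (e (Kf f)) (e (Lf f)))
    (hKLtan : ∀ f, e (Kf f) ≠ e (Lf f) →
      phiE γ (e (Kf f)) + phiE' γ (e (Kf f)) * (eKL f - e (Kf f))
        = phiE γ (e (Lf f)) + phiE' γ (e (Lf f)) * (eKL f - e (Lf f)))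
    (hKLeq : ∀ f, e (Kf f) = e (Lf f) → eKL f = e (Kf f))
    (hface₁ : ∀ f, 0 ≤ uf f → ef f ∈ Set.uIcc (e (Kf f)) (eKL f))
    (hface₂ : ∀ f, uf f < 0 → ef f ∈ Set.uIcc (e (Lf f)) (eKL f)) :
    (∀ Kc : Cell,
      (∑ f ∈ cellFaces Kf Lf Kc,
          dphi (phiE γ) (phiE' γ) (e (Kf f)) (e (Lf f)) (eKL f) (ef f) *
            (area f * ρf f * orientedVel Kf uf Kc f)) / measK Kc
        ≤ (∑ f ∈ cellFaces Kf Lf Kc,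
            (area f * ρf f * orientedVel Kf uf Kc f) *
              (phiE γ (e Kc) + phiE' γ (e Kc) * (ef f - e Kc) - phiE γ (ef f))) / measK Kc)
    ∧ ∀ (h G : ℝ), 0 < h → 0 ≤ G → ∀ ψ : Cell → ℝ,
        (∀ f, |ψ (Kf f) - ψ (Lf f)| ≤ G * h) →
        |∑ Kc : Cell,
            (∑ f ∈ cellFaces Kf Lf Kc,
              dphi (phiE γ) (phiE' γ) (e (Kf f)) (e (Lf f)) (eKL f) (ef f) *
                (area f * ρf f * orientedVel Kf uf Kc f)) * ψ Kc|
          ≤ 3 * M ^ 2 * max |phiE' γ (1 / M)| |phiE' γ M| * G * h *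
              ∑ f : Face, area f * |e (Kf f) - e (Lf f)| := by
  have hM0 : (0:ℝ) < M := by linarith
  have hγ1 : (0:ℝ) < γ - 1 := by linarith
  have hiM : (0:ℝ) < 1 / M := by positivity
  have hepos : ∀ Kc, 0 < e Kc := fun Kc => lt_of_lt_of_le hiM (he Kc).1
  -- tangent identity holds unconditionally
  have htan : ∀ f, phiE γ (e (Kf f)) + phiE' γ (e (Kf f)) * (eKL f - e (Kf f))
      = phiE γ (e (Lf f)) + phiE' γ (e (Lf f)) * (eKL f - e (Lf f)) := by
    intro f
    by_cases hc : e (Kf f) = e (Lf f)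
    · rw [hKLeq f hc, hc]
    · exact hKLtan f hc
  constructor
  · intro Kc
    gcongr (?_) / measK Kc
    · exact le_of_lt (hmeas Kc)
    apply Finset.sum_le_sum
    intro f hf
    simp only [cellFaces, Finset.mem_filter, Finset.mem_univ, true_and] at hf
    rcases hf with hf | hf
    · -- K = Kf f
      subst hf
      rw [show orientedVel Kf uf (Kf f) f = uf f from if_pos rfl]
      apply RDaux.key_K
      rcases le_or_gt 0 (uf f) with hu0 | hu0
      · have hs := RDaux.sign_nonneg hγ (hepos (Kf f)) (hepos (Lf f)) (hKLmem f) (hface₁ f hu0)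
        have hF : 0 ≤ area f * ρf f * uf f :=
          mul_nonneg (mul_nonneg (le_of_lt (harea f)) (le_of_lt (hρf f).1)) hu0
        exact mul_nonneg hF hs
      · have hs := RDaux.sign_nonpos hγ (hepos (Kf f)) (hepos (Lf f)) (hKLmem f) (hface₂ f hu0)
        have hF : area f * ρf f * uf f ≤ 0 := by
          have := mul_pos (harea f) (hρf f).1
          nlinarith
        nlinarith
    · -- K = Lf f
      subst hf
      rw [show orientedVel Kf uf (Lf f) f = -uf f from if_neg (hKL f)]
      apply RDaux.key_L _ _ _ _ _ _ _ (htan f)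
      rcases le_or_gt 0 (uf f) with hu0 | hu0
      · have hs := RDaux.sign_nonneg hγ (hepos (Kf f)) (hepos (Lf f)) (hKLmem f) (hface₁ f hu0)
        have hF : area f * ρf f * -uf f ≤ 0 := by
          have := mul_pos (harea f) (hρf f).1
          nlinarith
        nlinarith
      · have hs := RDaux.sign_nonpos hγ (hepos (Kf f)) (hepos (Lf f)) (hKLmem f) (hface₂ f hu0)
        have hF : 0 ≤ area f * ρf f * -uf f := by
          have := mul_pos (harea f) (hρf f).1
          nlinarith
        nlinarith
  · intro h G hh hG ψ hψ
    have hBmax : max |phiE' γ (1 / M)| |phiE' γ M| = M / (γ - 1) := by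
      have h1 : phiE' γ (1 / M) = -(M / (γ - 1)) := by
        unfold phiE'; field_simp
      have h2 : |phiE' γ M| = 1 / ((γ - 1) * M) := by
        unfold phiE'
        rw [neg_div, abs_neg, abs_of_pos (by positivity)]
      rw [h1, abs_neg, abs_of_pos (by positivity), h2]
      apply max_eq_left
      rw [div_le_div_iff₀ (by positivity) hγ1]
      nlinarith [sq_nonneg (M - 1), sq_nonneg (M + 1)]
    rw [hBmax]
    -- conservative rewriting of the double sum
    have hswap : (∑ Kc : Cell,
            (∑ f ∈ cellFaces Kf Lf Kc,
              dphi (phiE γ) (phiE' γ) (e (Kf f)) (e (Lf f)) (eKL f) (ef f) *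
                (area f * ρf f * orientedVel Kf uf Kc f)) * ψ Kc)
        = ∑ f : Face, dphi (phiE γ) (phiE' γ) (e (Kf f)) (e (Lf f)) (eKL f) (ef f) *
            (area f * ρf f * uf f) * (ψ (Kf f) - ψ (Lf f)) := by
      have step1 : ∀ Kc : Cell,
          (∑ f ∈ cellFaces Kf Lf Kc,
              dphi (phiE γ) (phiE' γ) (e (Kf f)) (e (Lf f)) (eKL f) (ef f) *
                (area f * ρf f * orientedVel Kf uf Kc f)) * ψ Kc
          = ∑ f : Face, if Kf f = Kc ∨ Lf f = Kc then
              dphi (phiE γ) (phiE' γ) (e (Kf f)) (e (Lf f)) (eKL f) (ef f) *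
                (area f * ρf f * orientedVel Kf uf Kc f) * ψ Kc else 0 := by
        intro Kc
        rw [Finset.sum_mul, cellFaces, Finset.sum_filter]
      rw [Finset.sum_congr rfl (fun Kc _ => step1 Kc), Finset.sum_comm]
      apply Finset.sum_congr rfl
      intro f _
      have hne := hKL f
      have hfil : (Finset.univ.filter (fun Kc => Kf f = Kc ∨ Lf f = Kc) : Finset Cell)
          = {Kf f, Lf f} := by
        ext Kc
        simp [eq_comm]
      rw [← Finset.sum_filter, hfil, Finset.sum_pair hne]
      simp [orientedVel, hne]
      ring
    rw [hswap]
    calc |∑ f : Face, dphi (phiE γ) (phiE' γ) (e (Kf f)) (e (Lf f)) (eKL f) (ef f) *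
            (area f * ρf f * uf f) * (ψ (Kf f) - ψ (Lf f))|
        ≤ ∑ f : Face, |dphi (phiE γ) (phiE' γ) (e (Kf f)) (e (Lf f)) (eKL f) (ef f) *
            (area f * ρf f * uf f) * (ψ (Kf f) - ψ (Lf f))| :=
          Finset.abs_sum_le_sum_abs _ _
      _ ≤ ∑ f : Face, 3 * M ^ 2 * (M / (γ - 1)) * G * h *
            (area f * |e (Kf f) - e (Lf f)|) := by
          apply Finset.sum_le_sum
          intro f _
          have hσ : ef f ∈ Set.uIcc (e (Kf f)) (e (Lf f)) := by
            rcases le_or_gt 0 (uf f) with hu0 | hu0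
            · exact Set.uIcc_subset_uIcc Set.left_mem_uIcc (hKLmem f) (hface₁ f hu0)
            · exact Set.uIcc_subset_uIcc Set.right_mem_uIcc (hKLmem f) (hface₂ f hu0)
          have hdb := RDaux.dphi_bound hγ hM (he (Kf f)) (he (Lf f)) (hKLmem f) hσ
          have habs : |dphi (phiE γ) (phiE' γ) (e (Kf f)) (e (Lf f)) (eKL f) (ef f) *
              (area f * ρf f * uf f) * (ψ (Kf f) - ψ (Lf f))|
              = |dphi (phiE γ) (phiE' γ) (e (Kf f)) (e (Lf f)) (eKL f) (ef f)| *
                (area f * ρf f * |uf f|) * |ψ (Kf f) - ψ (Lf f)| := by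
            rw [abs_mul, abs_mul, abs_mul, abs_mul, abs_of_pos (harea f),
              abs_of_pos (hρf f).1]
          rw [habs]
          calc |dphi (phiE γ) (phiE' γ) (e (Kf f)) (e (Lf f)) (eKL f) (ef f)| *
                (area f * ρf f * |uf f|) * |ψ (Kf f) - ψ (Lf f)|
              ≤ (3 * (M / (γ - 1)) * |e (Kf f) - e (Lf f)|) * (area f * M * M) * (G * h) := by
                have nn1 : 0 ≤ area f := (harea f).le
                have nn2 : 0 ≤ ρf f := (hρf f).1.le
                have nn3 : 0 ≤ area f * ρf f * |uf f| :=
                  mul_nonneg (mul_nonneg nn1 nn2) (abs_nonneg _)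
                have nn4 : 0 ≤ area f * M := mul_nonneg nn1 hM0.le
                have nn5 : 0 ≤ G * h := mul_nonneg hG hh.le
                gcongr <;>
                  first
                  | exact hdb
                  | exact (hρf f).2
                  | exact hu f
                  | exact hψ f
                  | exact nn1
                  | exact nn2
                  | exact nn3
                  | exact nn4
                  | exact nn5
            _ = 3 * M ^ 2 * (M / (γ - 1)) * G * h * (area f * |e (Kf f) - e (Lf f)|) := by
                ring
      _ = 3 * M ^ 2 * (M / (γ - 1)) * G * h *
            ∑ f : Face, area f * |e (Kf f) - e (Lf f)| := by
          rw [Finset.mul_sum]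
end
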